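/- Let R = k[[X,Y]], m = (X,Y), M = R/(X²−Y³), N = R/(X²−Y^a) with a > 3. With gr_m(M) = gr_m(N) = k[x,y]/(x²) over G = k[x,y], the Hilbert series 1 + 2∑_{j≥1}t^j of Tor_0^G and z t² + 2z∑_{j≥3}t^j of Tor_1^G reduce, after performing exactly the negative consecutive cancellations z t² + t³ and 2z t^j + 2t^{j+1} for all j ≥ 3, to the series 1 + 2t + 2t² + t³ (the Hilbert series of gr of the 6-dimensional module R/(X²−Y³, X²−Y^a)) in homological degree 0 and to 0 in homological degree 1. -/

import Mathlib

open MvPowerSeries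

/-- Bigraded Hilbert series of `Tor^G(gr M, gr N)`, `G = k[x,y]`,
`gr M = gr N = G/(x²)`:  row 0 is `1 + 2∑_{j≥1} t^j` and row 1 is `t² + 2∑_{j≥3} t^j`. -/
def torGrSeries : ℕ → ℕ → ℕ
  | 0, 0 => 1
  | 0, _ + 1 => 2
  | 1, j => if j = 2 then 1 else if 3 ≤ j then 2 else 0
  | _ + 2, _ => 0

/-- The result of the cancellations: `1 + 2t + 2t² + t³` in homological degree 0,
`0` in homological degree 1. -/
def reducedSeries : ℕ → ℕ → ℕ
  | 0, 0 => 1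
  | 0, 1 => 2
  | 0, 2 => 2
  | 0, 3 => 1
  | 0, _ + 4 => 0
  | _ + 1, _ => 0

/-- The total of the negative consecutive cancellations performed:
`z t² + t³` and `2z t^j + 2t^{j+1}` for all `j ≥ 3`. -/
def cancelSeries : ℕ → ℕ → ℕ
  | 1, 2 => 1
  | 1, j => if 3 ≤ j then 2 else 0
  | 0, 3 => 1
  | 0, j => if 4 ≤ j then 2 else 0
  | _ + 2, _ => 0

section Aux
open scoped Classical
variable {k : Type} [Field k]
def UpClosed (P : (Fin 2 →₀ ℕ) → Prop) : Prop := ∀ d e, P d → P (d + e)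
def idealOf (P : (Fin 2 →₀ ℕ) → Prop) (hP : UpClosed P) : Ideal (MvPowerSeries (Fin 2) k) where
  carrier := {f | ∀ d, ¬ P d → coeff (R := k) d f = 0}
  add_mem' := fun hf hg d hd => by rw [map_add, hf d hd, hg d hd, add_zero]
  zero_mem' := fun d hd => by simp
  smul_mem' := by
    intro c f hf d hd
    rw [smul_eq_mul, coeff_mul]
    refine Finset.sum_eq_zero fun p hp => ?_
    rcases em (P p.2) with h | h
    · exact absurd (by rw [← Finset.HasAntidiagonal.mem_antidiagonal.mp hp, add_comm]; exact hP _ _ h) hd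
    · rw [hf p.2 h, mul_zero]
lemma mem_idealOf {P : (Fin 2 →₀ ℕ) → Prop} {hP : UpClosed P} {f : MvPowerSeries (Fin 2) k} :
    f ∈ idealOf P hP ↔ ∀ d, ¬ P d → coeff (R := k) d f = 0 := Iff.rfl
def ofFun (g : (Fin 2 →₀ ℕ) → k) : MvPowerSeries (Fin 2) k := g
lemma coeff_ofFun (g : (Fin 2 →₀ ℕ) → k) (d : Fin 2 →₀ ℕ) : coeff (R := k) d (ofFun g) = g d := rfl
noncomputable def shiftE (e : Fin 2 →₀ ℕ) (f : MvPowerSeries (Fin 2) k) : MvPowerSeries (Fin 2) k :=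
  ofFun fun d => coeff (R := k) (d + e) f
lemma coeff_monomial_one_mul_shiftE (e d : Fin 2 →₀ ℕ) (f : MvPowerSeries (Fin 2) k) :
    coeff (R := k) d (monomial (R := k) e 1 * shiftE e f) = if e ≤ d then coeff (R := k) d f else 0 := by
  rw [coeff_monomial_mul]
  split_ifs with h
  · rw [one_mul, shiftE, coeff_ofFun, tsub_add_cancel_of_le h]
  · rfl
lemma eq_monomial_mul_shiftE (e : Fin 2 →₀ ℕ) (f : MvPowerSeries (Fin 2) k)
    (hf : ∀ d, ¬ e ≤ d → coeff (R := k) d f = 0) :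
    monomial (R := k) e 1 * shiftE e f = f := by
  ext d
  rw [coeff_monomial_one_mul_shiftE]
  split_ifs with h
  · rfl
  · exact (hf d h).symm
noncomputable def truncP (P : (Fin 2 →₀ ℕ) → Prop) (f : MvPowerSeries (Fin 2) k) :
    MvPowerSeries (Fin 2) k :=
  ofFun fun d => if P d then coeff (R := k) d f else 0
lemma coeff_truncP (P : (Fin 2 →₀ ℕ) → Prop) (f : MvPowerSeries (Fin 2) k) (d : Fin 2 →₀ ℕ) :
    coeff (R := k) d (truncP P f) = if P d then coeff (R := k) d f else 0 := rfl
lemma fin2_eq (d : Fin 2 →₀ ℕ) : d = Finsupp.single 0 (d 0) + Finsupp.single 1 (d 1) := by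
  ext i
  fin_cases i <;> simp [Finsupp.single_apply]
lemma fin2_eq_zero (d : Fin 2 →₀ ℕ) (h0 : d 0 = 0) (h1 : d 1 = 0) : d = 0 := by
  rw [fin2_eq d, h0, h1]; simp

-- ### the staircase predicate for (X², Y³)
def P1 (d : Fin 2 →₀ ℕ) : Prop := 2 ≤ d 0 ∨ 3 ≤ d 1

lemma hP1 : UpClosed P1 := by
  intro d e h
  rcases h with h | h
  · exact Or.inl (le_trans h (by simp))
  · exact Or.inr (le_trans h (by simp))

lemma span_X2_Y3 :
    Ideal.span {(X 0 : MvPowerSeries (Fin 2) k) ^ 2, X 1 ^ 3} = idealOf P1 hP1 := by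
  apply le_antisymm
  · rw [Ideal.span_le]
    rintro f (rfl | rfl)
    · intro d hd
      rw [X_pow_eq, coeff_monomial, if_neg]
      rintro rfl
      exact hd (Or.inl (by simp))
    · intro d hd
      rw [X_pow_eq, coeff_monomial, if_neg]
      rintro rfl
      exact hd (Or.inr (by simp))
  · intro f hf
    have h1 : monomial (R := k) (Finsupp.single 0 2) 1 * shiftE (Finsupp.single 0 2)
        (truncP (fun d => 2 ≤ d 0) f) = truncP (fun d => 2 ≤ d 0) f := by
      apply eq_monomial_mul_shiftE
      intro d hd
      rw [coeff_truncP, if_neg]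
      rwa [Finsupp.single_le_iff] at hd
    have h2 : monomial (R := k) (Finsupp.single 1 3) 1 * shiftE (Finsupp.single 1 3)
        (f - truncP (fun d => 2 ≤ d 0) f) = f - truncP (fun d => 2 ≤ d 0) f := by
      apply eq_monomial_mul_shiftE
      intro d hd
      rw [Finsupp.single_le_iff] at hd
      rw [map_sub, coeff_truncP]
      split_ifs with h
      · rw [sub_self]
      · rw [hf d (by rintro (h'|h') <;> omega), sub_zero]
    have hsplit : f = truncP (fun d => 2 ≤ d 0) f + (f - truncP (fun d => 2 ≤ d 0) f) := by ring
    rw [hsplit, ← h2, ← h1]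
    have hx : (X 0 : MvPowerSeries (Fin 2) k) ^ 2 ∈
        Ideal.span {(X 0 : MvPowerSeries (Fin 2) k) ^ 2, X 1 ^ 3} :=
      Ideal.subset_span (Set.mem_insert _ _)
    have hy : (X 1 : MvPowerSeries (Fin 2) k) ^ 3 ∈
        Ideal.span {(X 0 : MvPowerSeries (Fin 2) k) ^ 2, X 1 ^ 3} :=
      Ideal.subset_span (Set.mem_insert_of_mem _ rfl)
    rw [← X_pow_eq, ← X_pow_eq]
    exact add_mem (Ideal.mul_mem_right _ _ hx) (Ideal.mul_mem_right _ _ hy)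

-- ### the given span equals span {X², Y³}
lemma span_given (a : ℕ) (ha : 3 < a) :
    Ideal.span {(X 0 : MvPowerSeries (Fin 2) k) ^ 2 - X 1 ^ 3,
        (X 0 : MvPowerSeries (Fin 2) k) ^ 2 - X 1 ^ a} =
      Ideal.span {(X 0 : MvPowerSeries (Fin 2) k) ^ 2, X 1 ^ 3} := by
  have hpow : (X 1 : MvPowerSeries (Fin 2) k) ^ a = X 1 ^ 3 * X 1 ^ (a - 3) := by
    rw [← pow_add]
    congr 1
    omega
  apply le_antisymm
  · rw [Ideal.span_le]
    have hx : (X 0 : MvPowerSeries (Fin 2) k) ^ 2 ∈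
        Ideal.span {(X 0 : MvPowerSeries (Fin 2) k) ^ 2, X 1 ^ 3} :=
      Ideal.subset_span (Set.mem_insert _ _)
    have hy : (X 1 : MvPowerSeries (Fin 2) k) ^ 3 ∈
        Ideal.span {(X 0 : MvPowerSeries (Fin 2) k) ^ 2, X 1 ^ 3} :=
      Ideal.subset_span (Set.mem_insert_of_mem _ rfl)
    rintro f (rfl | rfl)
    · exact sub_mem hx hy
    · rw [hpow]
      exact sub_mem hx (Ideal.mul_mem_right _ _ hy)
  · rw [Ideal.span_le]
    have h1 : (X 0 : MvPowerSeries (Fin 2) k) ^ 2 - X 1 ^ 3 ∈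
        Ideal.span {(X 0 : MvPowerSeries (Fin 2) k) ^ 2 - X 1 ^ 3,
          (X 0 : MvPowerSeries (Fin 2) k) ^ 2 - X 1 ^ a} :=
      Ideal.subset_span (Set.mem_insert _ _)
    have h2 : (X 0 : MvPowerSeries (Fin 2) k) ^ 2 - X 1 ^ a ∈
        Ideal.span {(X 0 : MvPowerSeries (Fin 2) k) ^ 2 - X 1 ^ 3,
          (X 0 : MvPowerSeries (Fin 2) k) ^ 2 - X 1 ^ a} :=
      Ideal.subset_span (Set.mem_insert_of_mem _ rfl)
    have hu : constantCoeff (σ := Fin 2) (R := k) ((X 1 : MvPowerSeries (Fin 2) k) ^ (a - 3) - 1) ≠ 0 := by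
      rw [map_sub, map_one, map_pow, constantCoeff_X, zero_pow (by omega), zero_sub]
      exact neg_ne_zero.mpr one_ne_zero
    have hY3 : (X 1 : MvPowerSeries (Fin 2) k) ^ 3 ∈
        Ideal.span {(X 0 : MvPowerSeries (Fin 2) k) ^ 2 - X 1 ^ 3,
          (X 0 : MvPowerSeries (Fin 2) k) ^ 2 - X 1 ^ a} := by
      have hdiff := sub_mem h1 h2
      have heq : ((X 0 : MvPowerSeries (Fin 2) k) ^ 2 - X 1 ^ 3) - (X 0 ^ 2 - X 1 ^ a) =
          X 1 ^ 3 * (X 1 ^ (a - 3) - 1) := by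
        rw [mul_sub, mul_one, ← hpow]
        ring
      rw [heq] at hdiff
      have := Ideal.mul_mem_right ((X 1 : MvPowerSeries (Fin 2) k) ^ (a - 3) - 1)⁻¹ _ hdiff
      rwa [mul_assoc, MvPowerSeries.mul_inv_cancel _ hu, mul_one] at this
    rintro f (rfl | rfl)
    · simpa using add_mem h1 hY3
    · exact hY3
-- ### degree predicate
def Pdeg (j : ℕ) (d : Fin 2 →₀ ℕ) : Prop := j ≤ d 0 + d 1

lemma hPdeg (j : ℕ) : UpClosed (Pdeg j) := by
  intro d e h
  unfold Pdeg at *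
  simp only [Finsupp.add_apply]
  omega

lemma mem_maxIdeal_iff {f : MvPowerSeries (Fin 2) k} :
    f ∈ IsLocalRing.maximalIdeal (MvPowerSeries (Fin 2) k) ↔ coeff (R := k) 0 f = 0 := by
  rw [IsLocalRing.mem_maximalIdeal, mem_nonunits_iff, MvPowerSeries.isUnit_iff_constantCoeff,
    isUnit_iff_ne_zero, not_ne_iff, coeff_zero_eq_constantCoeff]

lemma X_mem_maxIdeal (s : Fin 2) :
    (X s : MvPowerSeries (Fin 2) k) ∈ IsLocalRing.maximalIdeal (MvPowerSeries (Fin 2) k) := by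
  rw [mem_maxIdeal_iff, coeff_zero_eq_constantCoeff, constantCoeff_X]

lemma maxIdeal_pow (j : ℕ) :
    (IsLocalRing.maximalIdeal (MvPowerSeries (Fin 2) k)) ^ j = idealOf (Pdeg j) (hPdeg j) := by
  induction j with
  | zero =>
    rw [pow_zero, Ideal.one_eq_top]
    apply le_antisymm
    · intro f _ d hd
      exact absurd (Nat.zero_le _) hd
    · exact le_top
  | succ j ih =>
    apply le_antisymm
    · rw [pow_succ, Ideal.mul_le]
      intro r hr s hs
      rw [ih] at hr
      intro d hd
      rw [coeff_mul]
      refine Finset.sum_eq_zero fun p hp => ?_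
      have hpd := Finset.HasAntidiagonal.mem_antidiagonal.mp hp
      rcases em (p.2 = 0) with h2 | h2
      · rw [h2, mem_maxIdeal_iff.mp hs, mul_zero]
      · have hdeg2 : 1 ≤ p.2 0 + p.2 1 := by
          by_contra hc
          exact h2 (fin2_eq_zero p.2 (by omega) (by omega))
        rw [hr p.1 ?_, zero_mul]
        unfold Pdeg at hd ⊢
        have : d 0 = p.1 0 + p.2 0 := by rw [← hpd]; rfl
        have : d 1 = p.1 1 + p.2 1 := by rw [← hpd]; rfl
        omega
    · intro f hf
      have h1 : monomial (R := k) (Finsupp.single 0 1) 1 * shiftE (Finsupp.single 0 1)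
          (truncP (fun d => 1 ≤ d 0) f) = truncP (fun d => 1 ≤ d 0) f := by
        apply eq_monomial_mul_shiftE
        intro d hd
        rw [coeff_truncP, if_neg]
        rwa [Finsupp.single_le_iff] at hd
      have h2 : monomial (R := k) (Finsupp.single 1 1) 1 * shiftE (Finsupp.single 1 1)
          (f - truncP (fun d => 1 ≤ d 0) f) = f - truncP (fun d => 1 ≤ d 0) f := by
        apply eq_monomial_mul_shiftE
        intro d hd
        rw [Finsupp.single_le_iff] at hd
        rw [map_sub, coeff_truncP]
        split_ifs with h
        · rw [sub_self]
        · rw [hf d ?_, sub_zero]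
          unfold Pdeg
          omega
      have hg : shiftE (Finsupp.single 0 1) (truncP (fun d => 1 ≤ d 0) f) ∈
          (IsLocalRing.maximalIdeal (MvPowerSeries (Fin 2) k)) ^ j := by
        rw [ih]
        intro d hd
        rw [shiftE, coeff_ofFun, coeff_truncP]
        have hdd : (d + Finsupp.single 0 1 : Fin 2 →₀ ℕ) 0 + (d + Finsupp.single 0 1 : Fin 2 →₀ ℕ) 1 = d 0 + d 1 + 1 := by
          simp only [Finsupp.add_apply, Finsupp.single_apply]
          simp
          omega
        split_ifs with h
        · apply hf
          unfold Pdeg at hd ⊢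
          omega
        · rfl
      have hh : shiftE (Finsupp.single 1 1) (f - truncP (fun d => 1 ≤ d 0) f) ∈
          (IsLocalRing.maximalIdeal (MvPowerSeries (Fin 2) k)) ^ j := by
        rw [ih]
        intro d hd
        rw [shiftE, coeff_ofFun, map_sub, coeff_truncP]
        have hdd : (d + Finsupp.single 1 1 : Fin 2 →₀ ℕ) 0 + (d + Finsupp.single 1 1 : Fin 2 →₀ ℕ) 1 = d 0 + d 1 + 1 := by
          simp only [Finsupp.add_apply, Finsupp.single_apply]
          simp
          omega
        have hfd : coeff (R := k) (d + Finsupp.single 1 1) f = 0 := by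
          apply hf
          unfold Pdeg at hd ⊢
          omega
        rw [hfd]
        split_ifs <;> simp
      have hsplit : f = truncP (fun d => 1 ≤ d 0) f + (f - truncP (fun d => 1 ≤ d 0) f) := by ring
      rw [hsplit, ← h2]
      nth_rewrite 1 [← h1]
      have hX : ∀ s : Fin 2, (monomial (R := k) (Finsupp.single s 1) (1:k)) ∈
          IsLocalRing.maximalIdeal (MvPowerSeries (Fin 2) k) := by
        intro s
        rw [mem_maxIdeal_iff, coeff_monomial, if_neg]
        exact fun h => one_ne_zero (Finsupp.single_eq_zero.mp h.symm)
      rw [pow_succ']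
      exact add_mem (Ideal.mul_mem_mul (hX 0) hg) (Ideal.mul_mem_mul (hX 1) hh)

-- ### sup of staircase ideals
lemma idealOf_sup (P Q : (Fin 2 →₀ ℕ) → Prop) (hP : UpClosed P) (hQ : UpClosed Q) :
    (idealOf P hP ⊔ idealOf Q hQ : Ideal (MvPowerSeries (Fin 2) k)) =
      idealOf (fun d => P d ∨ Q d) (fun d e h => h.imp (hP d e) (hQ d e)) := by
  apply le_antisymm
  · apply sup_le
    · intro f hf d hd
      exact hf d (fun h => hd (Or.inl h))
    · intro f hf d hd
      exact hf d (fun h => hd (Or.inr h))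
  · intro f hf
    have hmem1 : truncP P f ∈ idealOf P hP := by
      intro d hd
      rw [coeff_truncP, if_neg hd]
    have hmem2 : f - truncP P f ∈ idealOf Q hQ := by
      intro d hd
      rw [map_sub, coeff_truncP]
      split_ifs with h
      · rw [sub_self]
      · rw [hf d (by tauto), sub_zero]
    have hsplit : f = truncP P f + (f - truncP P f) := by ring
    rw [hsplit]
    exact Submodule.add_mem_sup hmem1 hmem2

-- ### master finrank lemma
lemma finrank_eq_of_proj {M : Type} [AddCommGroup M] [Module k M]
    (π : MvPowerSeries (Fin 2) k →ₗ[k] M) (hπ : Function.Surjective π)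
    (P : (Fin 2 →₀ ℕ) → Prop) (hP : UpClosed P)
    (hker : ∀ f, π f = 0 ↔ f ∈ idealOf P hP)
    (n : ℕ) (e : Fin n → (Fin 2 →₀ ℕ)) (einj : Function.Injective e)
    (he1 : ∀ i, ¬ P (e i)) (he2 : ∀ d, ¬ P d → ∃ i, e i = d) :
    Module.finrank k M = n := by
  have hmono : ∀ (c : Fin n → k) (i : Fin n),
      monomial (R := k) (e i) (c i) = c i • monomial (R := k) (e i) (1 : k) := by
    intro c i
    rw [← map_smul, smul_eq_mul, mul_one]
  have key : ∀ (c : Fin n → k), π (∑ i, monomial (R := k) (e i) (c i)) =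
      ∑ i, c i • π (monomial (R := k) (e i) 1) := by
    intro c
    rw [map_sum]
    refine Finset.sum_congr rfl fun i _ => ?_
    rw [hmono, map_smul]
  have hcoeff : ∀ (c : Fin n → k) (i₀ : Fin n),
      coeff (R := k) (e i₀) (∑ i, monomial (R := k) (e i) (c i)) = c i₀ := by
    intro c i₀
    rw [map_sum, Finset.sum_eq_single i₀]
    · rw [coeff_monomial_same]
    · intro i _ hne
      rw [coeff_monomial, if_neg fun h => hne (einj h.symm)]
    · intro h
      exact absurd (Finset.mem_univ i₀) h
  set v : Fin n → M := fun i => π (monomial (R := k) (e i) 1) with hv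
  have hindep : LinearIndependent k v := by
    rw [Fintype.linearIndependent_iff]
    intro c hc i₀
    have h0 : π (∑ i, monomial (R := k) (e i) (c i)) = 0 := by rw [key]; exact hc
    have := (hker _).mp h0 (e i₀) (he1 i₀)
    rw [hcoeff c i₀] at this
    exact this
  have hspan : ⊤ ≤ Submodule.span k (Set.range v) := by
    rintro x -
    obtain ⟨f, rfl⟩ := hπ x
    have hmem : π (f - ∑ i, monomial (R := k) (e i) (coeff (R := k) (e i) f)) = 0 := by
      rw [hker]
      intro d hd
      obtain ⟨i₀, rfl⟩ := he2 d hd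
      rw [map_sub, hcoeff, sub_self]
    rw [map_sub, sub_eq_zero] at hmem
    rw [hmem, key]
    exact Submodule.sum_mem _ fun i _ =>
      Submodule.smul_mem _ _ (Submodule.subset_span ⟨i, rfl⟩)
  have b : Module.Basis (Fin n) k M := Module.Basis.mk hindep hspan
  rw [Module.finrank_eq_card_basis b, Fintype.card_fin]

-- ### the exponents below the staircase, ordered by degree:
-- (0,0),(1,0),(0,1),(1,1),(0,2),(1,2)
noncomputable def eStair (n : ℕ) : Fin n → (Fin 2 →₀ ℕ) := fun i =>
  Finsupp.single 0 (i.val % 2) + Finsupp.single 1 (i.val / 2)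

lemma eStair_apply0 {n : ℕ} (i : Fin n) : eStair n i 0 = i.val % 2 := by
  simp [eStair, Finsupp.single_apply]

lemma eStair_apply1 {n : ℕ} (i : Fin n) : eStair n i 1 = i.val / 2 := by
  simp [eStair, Finsupp.single_apply]

lemma eStair_inj (n : ℕ) : Function.Injective (eStair n) := by
  intro i j h
  have h0 : eStair n i 0 = eStair n j 0 := by rw [h]
  have h1 : eStair n i 1 = eStair n j 1 := by rw [h]
  rw [eStair_apply0, eStair_apply0] at h0
  rw [eStair_apply1, eStair_apply1] at h1
  exact Fin.ext (by omega)

lemma eStair_eq (n : ℕ) (d : Fin 2 →₀ ℕ) (h : d 0 + 2 * d 1 < n) (h0 : d 0 < 2) :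
    eStair n ⟨d 0 + 2 * d 1, h⟩ = d := by
  have hm : (d 0 + 2 * d 1) % 2 = d 0 := by omega
  have hdv : (d 0 + 2 * d 1) / 2 = d 1 := by omega
  simp only [eStair]
  rw [hm, hdv, ← fin2_eq]

-- ### membership in J • ⊤ on a quotient ring
lemma mk_mem_smul_top_iff (I J : Ideal (MvPowerSeries (Fin 2) k)) (x : MvPowerSeries (Fin 2) k) :
    Ideal.Quotient.mk I x ∈
      J • (⊤ : Submodule (MvPowerSeries (Fin 2) k) (MvPowerSeries (Fin 2) k ⧸ I)) ↔
    x ∈ J ⊔ I := by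
  have hsmul : ∀ (r z : MvPowerSeries (Fin 2) k),
      r • (Ideal.Quotient.mk I z) = Ideal.Quotient.mk I (r * z) := by
    intro r z
    rfl
  constructor
  · intro h
    have key : ∀ y ∈ J • (⊤ : Submodule (MvPowerSeries (Fin 2) k)
        (MvPowerSeries (Fin 2) k ⧸ I)), ∃ z ∈ J ⊔ I, Ideal.Quotient.mk I z = y := by
      intro y hy
      refine Submodule.smul_induction_on hy ?_ ?_
      · intro r hr m _
        obtain ⟨z, rfl⟩ := Ideal.Quotient.mk_surjective m
        exact ⟨r * z, Ideal.mul_mem_right _ _ (Ideal.mem_sup_left hr), (hsmul r z).symm⟩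
      · rintro y₁ y₂ ⟨z₁, hz₁, rfl⟩ ⟨z₂, hz₂, rfl⟩
        exact ⟨z₁ + z₂, add_mem hz₁ hz₂, map_add _ _ _⟩
    obtain ⟨z, hz, hzx⟩ := key _ h
    have hxz : x - z ∈ I := by
      rw [← Ideal.Quotient.eq_zero_iff_mem, map_sub, hzx, sub_self]
    have : x = z + (x - z) := by ring
    rw [this]
    exact add_mem hz (Ideal.mem_sup_right hxz)
  · intro h
    obtain ⟨b, hb, c, hc, rfl⟩ := Submodule.mem_sup.mp h
    rw [map_add, Ideal.Quotient.eq_zero_iff_mem.mpr hc, add_zero]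
    have : Ideal.Quotient.mk I b = b • Ideal.Quotient.mk I 1 := by
      rw [hsmul, mul_one]
    rw [this]
    exact Submodule.smul_mem_smul hb trivial

-- ### finrank of the ambient quotient
lemma finrank_quot (a : ℕ) (ha : 3 < a) :
    Module.finrank k (MvPowerSeries (Fin 2) k ⧸
      Ideal.span {(X 0 : MvPowerSeries (Fin 2) k) ^ 2 - X 1 ^ 3,
        (X 0 : MvPowerSeries (Fin 2) k) ^ 2 - X 1 ^ a}) = 6 := by
  set I := Ideal.span {(X 0 : MvPowerSeries (Fin 2) k) ^ 2 - X 1 ^ 3,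
        (X 0 : MvPowerSeries (Fin 2) k) ^ 2 - X 1 ^ a} with hI
  refine finrank_eq_of_proj (Ideal.Quotient.mkₐ k I).toLinearMap ?_ P1 hP1 ?_ 6 (eStair 6)
    (eStair_inj 6) ?_ ?_
  · intro y
    obtain ⟨f, rfl⟩ := Ideal.Quotient.mk_surjective y
    exact ⟨f, rfl⟩
  · intro f
    show Ideal.Quotient.mk I f = 0 ↔ _
    rw [Ideal.Quotient.eq_zero_iff_mem, hI, span_given a ha, span_X2_Y3]
  · intro i
    have hi := i.isLt
    rintro (h | h)
    · rw [eStair_apply0] at h; omega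
    · rw [eStair_apply1] at h; omega
  · intro d hd
    rw [P1, not_or, not_le, not_le] at hd
    exact ⟨⟨d 0 + 2 * d 1, by omega⟩, eStair_eq 6 d _ hd.1⟩

-- ### finrank of the quotient by mʲ
lemma finrank_double (a : ℕ) (ha : 3 < a) (j n : ℕ) (hn6 : n ≤ 6)
    (hn1 : ∀ i : ℕ, i < n → i % 2 + i / 2 < j)
    (hsurj : ∀ x y : ℕ, x < 2 → y < 3 → x + y < j → x + 2 * y < n) :
    Module.finrank k
      ((MvPowerSeries (Fin 2) k ⧸
        Ideal.span {(X 0 : MvPowerSeries (Fin 2) k) ^ 2 - X 1 ^ 3,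
          (X 0 : MvPowerSeries (Fin 2) k) ^ 2 - X 1 ^ a}) ⧸
        ((IsLocalRing.maximalIdeal (MvPowerSeries (Fin 2) k)) ^ j •
          (⊤ : Submodule (MvPowerSeries (Fin 2) k)
            (MvPowerSeries (Fin 2) k ⧸
              Ideal.span {(X 0 : MvPowerSeries (Fin 2) k) ^ 2 - X 1 ^ 3,
                (X 0 : MvPowerSeries (Fin 2) k) ^ 2 - X 1 ^ a})))) = n := by
  set I := Ideal.span {(X 0 : MvPowerSeries (Fin 2) k) ^ 2 - X 1 ^ 3,
        (X 0 : MvPowerSeries (Fin 2) k) ^ 2 - X 1 ^ a} with hI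
  set p := ((IsLocalRing.maximalIdeal (MvPowerSeries (Fin 2) k)) ^ j •
          (⊤ : Submodule (MvPowerSeries (Fin 2) k) (MvPowerSeries (Fin 2) k ⧸ I))) with hp
  have hQ : UpClosed (fun d => Pdeg j d ∨ P1 d) :=
    fun d e h => h.imp (hPdeg j d e) (hP1 d e)
  refine finrank_eq_of_proj
    ((LinearMap.restrictScalars k (Submodule.mkQ p)) ∘ₗ (Ideal.Quotient.mkₐ k I).toLinearMap) ?_
    (fun d => Pdeg j d ∨ P1 d) hQ ?_ n (eStair n) (eStair_inj n) ?_ ?_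
  · intro y
    obtain ⟨t, rfl⟩ := Submodule.Quotient.mk_surjective p y
    obtain ⟨f, rfl⟩ := Ideal.Quotient.mk_surjective t
    exact ⟨f, rfl⟩
  · intro f
    show Submodule.mkQ p (Ideal.Quotient.mk I f) = 0 ↔ _
    rw [Submodule.mkQ_apply, Submodule.Quotient.mk_eq_zero, hp, mk_mem_smul_top_iff,
      maxIdeal_pow, hI, span_given a ha, span_X2_Y3, idealOf_sup]
  · intro i
    have hi := i.isLt
    rintro (h | h | h)
    · rw [Pdeg, eStair_apply0, eStair_apply1] at h
      have := hn1 i.val hi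
      omega
    · rw [eStair_apply0] at h; omega
    · rw [eStair_apply1] at h; omega
  · intro d hd
    rw [not_or, Pdeg, not_le, P1, not_or, not_le, not_le] at hd
    obtain ⟨hdeg, h0, h1⟩ := hd
    exact ⟨⟨d 0 + 2 * d 1, hsurj _ _ h0 h1 hdeg⟩, eStair_eq n d _ h0⟩

end Aux

/-- For `R = k[[X,Y]]`, `M = R/(X²-Y³)`, `N = R/(X²-Yᵃ)` (`a > 3`),
with `gr M = gr N = k[x,y]/(x²)`: subtracting from the bigraded series of
`Tor^{k[x,y]}(gr M, gr N)` exactly the negative consecutive cancellations `z t² + t³`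
and `2z t^j + 2t^{j+1}` (`j ≥ 3`) yields `1 + 2t + 2t² + t³` in homological degree 0 —
which is the Hilbert series of `gr` of the 6-dimensional module
`T = R/(X²-Y³, X²-Yᵃ) = Tor_0^R(M,N)`, recorded by its partial sums
`dim_k T/m^jT = ∑_{l<j} g₀(l)` — and `0` in homological degree 1. -/
theorem example_cancellations (k : Type) [Field k] (a : ℕ) (ha : 3 < a) :
    (∀ i j, torGrSeries i j = reducedSeries i j + cancelSeries i j) ∧
    (∀ j, reducedSeries 1 j = 0) ∧
    Module.finrank k (MvPowerSeries (Fin 2) k ⧸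
      Ideal.span {(X 0 : MvPowerSeries (Fin 2) k) ^ 2 - X 1 ^ 3,
        (X 0 : MvPowerSeries (Fin 2) k) ^ 2 - X 1 ^ a}) = 6 ∧
    ∀ j : ℕ, Module.finrank k
      ((MvPowerSeries (Fin 2) k ⧸
        Ideal.span {(X 0 : MvPowerSeries (Fin 2) k) ^ 2 - X 1 ^ 3,
          (X 0 : MvPowerSeries (Fin 2) k) ^ 2 - X 1 ^ a}) ⧸
        ((IsLocalRing.maximalIdeal (MvPowerSeries (Fin 2) k)) ^ j •
          (⊤ : Submodule (MvPowerSeries (Fin 2) k)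
            (MvPowerSeries (Fin 2) k ⧸
              Ideal.span {(X 0 : MvPowerSeries (Fin 2) k) ^ 2 - X 1 ^ 3,
                (X 0 : MvPowerSeries (Fin 2) k) ^ 2 - X 1 ^ a})))) =
      ∑ l ∈ Finset.range j, reducedSeries 0 l := by
  refine ⟨?_, ?_, ?_, ?_⟩
  · intro i j
    match i, j with
    | 0, 0 => rfl
    | 0, 1 => rfl
    | 0, 2 => rfl
    | 0, 3 => rfl
    | 0, (m+4) =>
      show 2 = 0 + if 4 ≤ m + 4 then 2 else 0
      rw [if_pos (by omega)]
    | 1, 0 => rfl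
    | 1, 1 => rfl
    | 1, 2 => rfl
    | 1, (m+3) =>
      show (if m + 3 = 2 then 1 else if 3 ≤ m + 3 then 2 else 0) =
        0 + if 3 ≤ m + 3 then 2 else 0
      rw [if_neg (by omega), zero_add]
    | (m+2), j => rfl
  · intro j
    rfl
  · exact finrank_quot a ha
  · intro j
    match j with
    | 0 =>
      rw [finrank_double a ha 0 0 (by omega) (fun i hi => by omega) (fun x y hx hy h => by omega)]
      decide
    | 1 =>
      rw [finrank_double a ha 1 1 (by omega) (fun i hi => by omega) (fun x y hx hy h => by omega)]
      decide
    | 2 =>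
      rw [finrank_double a ha 2 3 (by omega) (fun i hi => by omega) (fun x y hx hy h => by omega)]
      decide
    | 3 =>
      rw [finrank_double a ha 3 5 (by omega) (fun i hi => by omega) (fun x y hx hy h => by omega)]
      decide
    | (m+4) =>
      rw [finrank_double a ha (m+4) 6 (by omega) (fun i hi => by omega) (fun x y hx hy h => by omega)]
      induction m with
      | zero => decide
      | succ m ih =>
        rw [show m + 1 + 4 = (m + 4) + 1 from by omega, Finset.sum_range_succ]
        rw [← ih]
        rfl
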